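/- Let A ∈ ℝ^{n×n} be a symmetric matrix with eigenvalues β₁,…,βₙ ordered so that |β₁| ≥ ⋯ ≥ |βₙ|, and E a symmetric matrix with ‖E‖₂ < |β_k|/2. Let P_k(A+E) = U Λ Uᵀ be the eigendecomposition of the best rank-k approximation of A+E. Then for every integer a ≥ 2, ‖A U Λ^{−a} Uᵀ A‖₂ ≤ 4·(|β_k|/2)^{−a+2}. -/

import Mathlib

open Matrix

noncomputable def opNorm {n : ℕ} (A : Matrix (Fin n) (Fin n) ℝ) : ℝ :=
  ‖Matrix.toEuclideanCLM (𝕜 := ℝ) A‖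

section Helpers

lemma opNorm_nonneg' {n : ℕ} (A : Matrix (Fin n) (Fin n) ℝ) : 0 ≤ opNorm A := norm_nonneg _

lemma opNorm_mul_le' {n : ℕ} (A B : Matrix (Fin n) (Fin n) ℝ) :
    opNorm (A * B) ≤ opNorm A * opNorm B := by
  unfold opNorm; rw [_root_.map_mul]; exact norm_mul_le _ _

lemma opNorm_add_le' {n : ℕ} (A B : Matrix (Fin n) (Fin n) ℝ) :
    opNorm (A + B) ≤ opNorm A + opNorm B := by
  unfold opNorm; rw [map_add]; exact norm_add_le _ _

lemma opNorm_neg' {n : ℕ} (A : Matrix (Fin n) (Fin n) ℝ) : opNorm (-A) = opNorm A := by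
  unfold opNorm; rw [map_neg]; exact norm_neg _

lemma opNorm_sub_le' {n : ℕ} (A B : Matrix (Fin n) (Fin n) ℝ) :
    opNorm (A - B) ≤ opNorm A + opNorm B := by
  rw [sub_eq_add_neg]
  calc opNorm (A + -B) ≤ opNorm A + opNorm (-B) := opNorm_add_le' A (-B)
    _ = opNorm A + opNorm B := by rw [opNorm_neg']

lemma opNorm_orthogonal' {n : ℕ} (hn : 0 < n) (V : Matrix (Fin n) (Fin n) ℝ)
    (hV : Vᵀ * V = 1) : opNorm V = 1 := by
  have h1 : opNorm V * opNorm V = 1 := by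
    have h2 : star V * V = 1 := hV
    have h3 := CStarRing.norm_star_mul_self (x := Matrix.toEuclideanCLM (𝕜 := ℝ) V)
    rw [← map_star, ← _root_.map_mul, h2, _root_.map_one] at h3
    have : Nonempty (Fin n) := ⟨⟨0, hn⟩⟩
    rw [norm_one] at h3
    unfold opNorm
    linarith [h3]
  nlinarith [opNorm_nonneg' V]

lemma opNorm_diagonal_le' {n : ℕ} (d : Fin n → ℝ) (b : ℝ) (hb : 0 ≤ b)
    (h : ∀ i, |d i| ≤ b) : opNorm (diagonal d) ≤ b := by
  apply ContinuousLinearMap.opNorm_le_bound _ hb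
  intro x
  have hco : ∀ i, (Matrix.toEuclideanCLM (𝕜 := ℝ) (diagonal d) x) i = d i * x i := by
    intro i
    have := Matrix.ofLp_toEuclideanCLM (𝕜 := ℝ) (diagonal d) x
    have h2 : (Matrix.toEuclideanCLM (𝕜 := ℝ) (diagonal d) x) i
        = (Matrix.toLin' (diagonal d) (WithLp.equiv 2 _ x)) i := congrFun this i
    rw [h2, Matrix.toLin'_apply, Matrix.mulVec_diagonal]
    rfl
  rw [EuclideanSpace.norm_eq, EuclideanSpace.norm_eq]
  have hle : ∑ i, ‖(Matrix.toEuclideanCLM (𝕜 := ℝ) (diagonal d) x) i‖ ^ 2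
      ≤ b ^ 2 * ∑ i, ‖x i‖ ^ 2 := by
    rw [Finset.mul_sum]
    apply Finset.sum_le_sum
    intro i _
    rw [hco i]
    have : ‖d i * x i‖ = |d i| * ‖x i‖ := by rw [norm_mul]; rfl
    rw [this, ← mul_pow]
    have h1 : |d i| * ‖x i‖ ≤ b * ‖x i‖ :=
      mul_le_mul_of_nonneg_right (h i) (norm_nonneg _)
    exact pow_le_pow_left₀ (by positivity) h1 2
  calc √(∑ i, ‖(Matrix.toEuclideanCLM (𝕜 := ℝ) (diagonal d) x) i‖ ^ 2)
      ≤ √(b ^ 2 * ∑ i, ‖x i‖ ^ 2) := Real.sqrt_le_sqrt hle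
    _ = b * √(∑ i, ‖x i‖ ^ 2) := by
        rw [Real.sqrt_mul (by positivity), Real.sqrt_sq hb]

/-- Euclidean norm of a plain vector. -/
noncomputable def en {n : ℕ} (x : Fin n → ℝ) : ℝ := Real.sqrt (x ⬝ᵥ x)

lemma dot_nonneg' {n : ℕ} (x : Fin n → ℝ) : 0 ≤ x ⬝ᵥ x :=
  Finset.sum_nonneg fun _ _ => mul_self_nonneg _

lemma en_eq_norm {n : ℕ} (x : Fin n → ℝ) :
    en x = ‖(WithLp.equiv 2 (Fin n → ℝ)).symm x‖ := by
  rw [EuclideanSpace.norm_eq, en]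
  congr 1
  apply Finset.sum_congr rfl
  intro i _
  rw [Real.norm_eq_abs, sq_abs, sq]
  rfl

lemma en_mulVec_le {n : ℕ} (M : Matrix (Fin n) (Fin n) ℝ) (x : Fin n → ℝ) :
    en (M *ᵥ x) ≤ opNorm M * en x := by
  rw [en_eq_norm, en_eq_norm]
  have h : Matrix.toEuclideanCLM (𝕜 := ℝ) M ((WithLp.equiv 2 (Fin n → ℝ)).symm x)
      = (WithLp.equiv 2 (Fin n → ℝ)).symm (M *ᵥ x) := Matrix.toEuclideanCLM_toLp M x
  rw [← h]
  exact ContinuousLinearMap.le_opNorm _ _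

lemma en_orth {n : ℕ} (M : Matrix (Fin n) (Fin n) ℝ) (hM : Mᵀ * M = 1) (u : Fin n → ℝ) :
    (M *ᵥ u) ⬝ᵥ (M *ᵥ u) = u ⬝ᵥ u := by
  rw [dotProduct_mulVec, ← mulVec_transpose, mulVec_mulVec, hM, one_mulVec]

lemma sum_extend {n k : ℕ} (h : k ≤ n) (g : Fin n → ℝ)
    (hg : ∀ m : Fin n, ¬ m.val < k → g m = 0) :
    ∑ m : Fin n, g m = ∑ j : Fin k, g (Fin.castLE h j) := by
  classical
  have hsub : (Finset.univ.map (Fin.castLEEmb h) : Finset (Fin n)) ⊆ Finset.univ :=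
    Finset.subset_univ _
  rw [← Finset.sum_subset hsub]
  · rw [Finset.sum_map]
    rfl
  · intro m _ hm
    apply hg
    intro hlt
    apply hm
    rw [Finset.mem_map]
    exact ⟨⟨m.val, hlt⟩, Finset.mem_univ _, by ext; simp⟩

lemma UDU_eq {n k : ℕ} (hkn : k < n) (V : Matrix (Fin n) (Fin n) ℝ)
    (U : Matrix (Fin n) (Fin k) ℝ)
    (hU : U = Matrix.of fun i (j : Fin k) => V i (Fin.castLE hkn.le j))
    (dk : Fin k → ℝ) (d' : Fin n → ℝ)
    (hd : ∀ j : Fin k, d' (Fin.castLE hkn.le j) = dk j)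
    (hd0 : ∀ m : Fin n, ¬ m.val < k → d' m = 0) :
    U * Matrix.diagonal dk * Uᵀ = V * Matrix.diagonal d' * Vᵀ := by
  ext i j
  rw [Matrix.mul_apply, Matrix.mul_apply]
  have h1 : ∀ m : Fin k, (U * Matrix.diagonal dk) i m * Uᵀ m j
      = V i (Fin.castLE hkn.le m) * dk m * V j (Fin.castLE hkn.le m) := by
    intro m
    rw [Matrix.mul_diagonal, hU]
    rfl
  have h2 : ∀ m : Fin n, (V * Matrix.diagonal d') i m * Vᵀ m j = V i m * d' m * V j m := by
    intro m
    rw [Matrix.mul_diagonal]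
    rfl
  simp only [h1, h2]
  rw [sum_extend hkn.le (fun m => V i m * d' m * V j m)]
  · apply Finset.sum_congr rfl
    intro m _
    rw [hd m]
  · intro m hm
    rw [hd0 m hm]
    ring

end Helpers

lemma weyl_step {n k : ℕ} (hk1 : 1 ≤ k) (hkn : k < n)
    (A E : Matrix (Fin n) (Fin n) ℝ)
    (P V : Matrix (Fin n) (Fin n) ℝ) (β lam : Fin n → ℝ)
    (hP : Pᵀ * P = 1) (hAdecomp : A = P * Matrix.diagonal β * Pᵀ)
    (hβsorted : Antitone (fun i => |β i|))
    (hV : Vᵀ * V = 1) (hWdecomp : A + E = V * Matrix.diagonal lam * Vᵀ)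
    (hlamsorted : Antitone (fun i => |lam i|)) :
    |β ⟨k - 1, (Nat.sub_le k 1).trans_lt hkn⟩| - opNorm E ≤ |lam ⟨k - 1, (Nat.sub_le k 1).trans_lt hkn⟩| := by
  classical
  set γ := |β ⟨k - 1, by omega⟩| with hγ
  set L := |lam ⟨k - 1, by omega⟩| with hL
  -- the two subspaces
  let f : (Fin k → ℝ) →ₗ[ℝ] (Fin n → ℝ) :=
    (Matrix.mulVecLin P).comp (Function.ExtendByZero.linearMap ℝ (Fin.castLE hkn.le))
  let g : (Fin (n - (k - 1)) → ℝ) →ₗ[ℝ] (Fin n → ℝ) :=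
    (Matrix.mulVecLin V).comp (Function.ExtendByZero.linearMap ℝ
      (fun j : Fin (n - (k - 1)) => (⟨j.val + (k - 1), by omega⟩ : Fin n)))
  have hPinj : Function.Injective (Matrix.mulVecLin P) := by
    intro u v huv
    have : Pᵀ *ᵥ (P *ᵥ u) = Pᵀ *ᵥ (P *ᵥ v) := by
      simpa [Matrix.mulVecLin_apply] using congrArg (Pᵀ *ᵥ ·) huv
    rwa [mulVec_mulVec, mulVec_mulVec, hP, one_mulVec, one_mulVec] at this
  have hVinj : Function.Injective (Matrix.mulVecLin V) := by
    intro u v huv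
    have : Vᵀ *ᵥ (V *ᵥ u) = Vᵀ *ᵥ (V *ᵥ v) := by
      simpa [Matrix.mulVecLin_apply] using congrArg (Vᵀ *ᵥ ·) huv
    rwa [mulVec_mulVec, mulVec_mulVec, hV, one_mulVec, one_mulVec] at this
  have hext1 : Function.Injective (Fin.castLE hkn.le) := Fin.castLE_injective _
  have hext2 : Function.Injective
      (fun j : Fin (n - (k - 1)) => (⟨j.val + (k - 1), by omega⟩ : Fin n)) := by
    intro u v huv
    have := congrArg Fin.val huv
    simp only at this
    exact Fin.ext (by omega)
  have hEBZinj : ∀ {m : ℕ} (s : Fin m → Fin n), Function.Injective s →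
      Function.Injective (Function.ExtendByZero.linearMap ℝ s) := by
    intro m s hs u v huv
    funext i
    have h1 := congrArg (fun w => w (s i)) huv
    have h2 : Function.extend s u 0 (s i) = Function.extend s v 0 (s i) := h1
    simpa [hs.extend_apply] using h2
  have hfinj : Function.Injective f := hPinj.comp (hEBZinj _ hext1)
  have hginj : Function.Injective g := hVinj.comp (hEBZinj _ hext2)
  have hfr : Module.finrank ℝ (LinearMap.range f) = k := by
    rw [LinearMap.finrank_range_of_inj hfinj]; simp
  have hgr : Module.finrank ℝ (LinearMap.range g) = n - (k - 1) := by
    rw [LinearMap.finrank_range_of_inj hginj]; simp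
  -- the intersection is nontrivial
  have hinter : LinearMap.range f ⊓ LinearMap.range g ≠ ⊥ := by
    intro hbot
    have h1 := Submodule.finrank_sup_add_finrank_inf_eq (LinearMap.range f) (LinearMap.range g)
    rw [hbot] at h1
    simp only [finrank_bot, add_zero] at h1
    have h2 : Module.finrank ℝ ↥(LinearMap.range f ⊔ LinearMap.range g) ≤ n := by
      have := Submodule.finrank_le (LinearMap.range f ⊔ LinearMap.range g)
      simpa using this
    omega
  obtain ⟨x, hxmem, hxne⟩ := Submodule.exists_mem_ne_zero_of_ne_bot hinter
  obtain ⟨⟨y, hy⟩, ⟨z, hz⟩⟩ := hxmem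
  set y' : Fin n → ℝ := Function.extend (Fin.castLE hkn.le) y 0 with hy'
  set z' : Fin n → ℝ := Function.extend
      (fun j : Fin (n - (k - 1)) => (⟨j.val + (k - 1), by omega⟩ : Fin n)) z 0 with hz'
  have hxy : x = P *ᵥ y' := by
    rw [← hy]; rfl
  have hxz : x = V *ᵥ z' := by
    rw [← hz]; rfl
  have hy0 : ∀ i : Fin n, ¬ i.val < k → y' i = 0 := by
    intro i hi
    rw [hy', Function.extend_apply']
    · rfl
    · rintro ⟨a, ha⟩
      exact hi (ha ▸ a.isLt)
  have hz0 : ∀ i : Fin n, i.val < k - 1 → z' i = 0 := by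
    intro i hi
    rw [hz', Function.extend_apply']
    · rfl
    · rintro ⟨a, ha⟩
      have h2 : (a : ℕ) + (k - 1) = (i : ℕ) := congrArg Fin.val ha
      omega
  -- A *ᵥ x
  have hsand : ∀ (M : Matrix (Fin n) (Fin n) ℝ) (d : Fin n → ℝ) (w : Fin n → ℝ),
      Mᵀ * M = 1 → (M * Matrix.diagonal d * Mᵀ) *ᵥ (M *ᵥ w) = M *ᵥ (fun i => d i * w i) := by
    intro M d w hM
    rw [mulVec_mulVec, Matrix.mul_assoc (M * Matrix.diagonal d) Mᵀ M, hM, Matrix.mul_one,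
      ← mulVec_mulVec]
    have hd : Matrix.diagonal d *ᵥ w = fun i => d i * w i :=
      funext fun i => mulVec_diagonal d w i
    rw [hd]
  have hAx : A *ᵥ x = P *ᵥ (fun i => β i * y' i) := by
    rw [hxy, hAdecomp]; exact hsand P β y' hP
  have hWx : (A + E) *ᵥ x = V *ᵥ (fun i => lam i * z' i) := by
    rw [hxz, hWdecomp]; exact hsand V lam z' hV
  -- quadratic bounds
  have hγ0 : 0 ≤ γ := abs_nonneg _
  have hL0 : 0 ≤ L := abs_nonneg _
  have hAq : γ ^ 2 * (x ⬝ᵥ x) ≤ (A *ᵥ x) ⬝ᵥ (A *ᵥ x) := by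
    rw [hAx, en_orth P hP, hxy, en_orth P hP]
    unfold dotProduct
    rw [Finset.mul_sum]
    apply Finset.sum_le_sum
    intro i _
    dsimp only
    by_cases hik : i.val < k
    · have hβi : γ ≤ |β i| := by
        apply hβsorted
        show i ≤ ⟨k - 1, by omega⟩
        exact Fin.le_def.mpr (by simp only [Fin.val_mk]; omega)
      have h2 : γ ^ 2 ≤ β i ^ 2 := by nlinarith [sq_abs (β i)]
      nlinarith [mul_self_nonneg (y' i), h2]
    · rw [hy0 i hik]; simp
  have hWq : ((A + E) *ᵥ x) ⬝ᵥ ((A + E) *ᵥ x) ≤ L ^ 2 * (x ⬝ᵥ x) := by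
    rw [hWx, en_orth V hV, hxz, en_orth V hV]
    unfold dotProduct
    rw [Finset.mul_sum]
    apply Finset.sum_le_sum
    intro i _
    dsimp only
    by_cases hik : k - 1 ≤ i.val
    · have hli : |lam i| ≤ L := by
        apply hlamsorted
        show (⟨k - 1, by omega⟩ : Fin n) ≤ i
        exact Fin.le_def.mpr (by simp only [Fin.val_mk]; omega)
      have h2 : lam i ^ 2 ≤ L ^ 2 := by nlinarith [sq_abs (lam i), abs_nonneg (lam i)]
      nlinarith [mul_self_nonneg (z' i), h2]
    · rw [hz0 i (by omega)]; simp
  -- pass to Euclidean norms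
  have henx : 0 < en x := by
    rw [en]
    apply Real.sqrt_pos.mpr
    rcases lt_or_eq_of_le (dot_nonneg' x) with h | h
    · exact h
    · exfalso
      apply hxne
      funext i
      have h3 := (Finset.sum_eq_zero_iff_of_nonneg
        (fun j (_ : j ∈ Finset.univ) => mul_self_nonneg (x j))).mp h.symm i (Finset.mem_univ i)
      show x i = 0
      exact mul_self_eq_zero.mp h3
  have hA_lower : γ * en x ≤ en (A *ᵥ x) := by
    rw [en, en]
    calc γ * Real.sqrt (x ⬝ᵥ x) = Real.sqrt (γ ^ 2 * (x ⬝ᵥ x)) := by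
          rw [Real.sqrt_mul (by positivity), Real.sqrt_sq hγ0]
      _ ≤ Real.sqrt ((A *ᵥ x) ⬝ᵥ (A *ᵥ x)) := Real.sqrt_le_sqrt hAq
  have hW_upper : en ((A + E) *ᵥ x) ≤ L * en x := by
    rw [en, en]
    calc Real.sqrt (((A + E) *ᵥ x) ⬝ᵥ ((A + E) *ᵥ x)) ≤ Real.sqrt (L ^ 2 * (x ⬝ᵥ x)) :=
          Real.sqrt_le_sqrt hWq
      _ = L * Real.sqrt (x ⬝ᵥ x) := by rw [Real.sqrt_mul (by positivity), Real.sqrt_sq hL0]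
  have hE_upper : en (E *ᵥ x) ≤ opNorm E * en x := en_mulVec_le E x
  have htri : en (A *ᵥ x) - en (E *ᵥ x) ≤ en ((A + E) *ᵥ x) := by
    have hsum : (A + E) *ᵥ x = A *ᵥ x + E *ᵥ x := add_mulVec A E x
    rw [hsum, en_eq_norm, en_eq_norm, en_eq_norm]
    have hadd : (WithLp.equiv 2 (Fin n → ℝ)).symm (A *ᵥ x + E *ᵥ x)
        = (WithLp.equiv 2 (Fin n → ℝ)).symm (A *ᵥ x) + (WithLp.equiv 2 (Fin n → ℝ)).symm (E *ᵥ x) := rfl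
    rw [hadd]
    have := norm_add_le ((WithLp.equiv 2 (Fin n → ℝ)).symm (A *ᵥ x)
      + (WithLp.equiv 2 (Fin n → ℝ)).symm (E *ᵥ x)) (-(WithLp.equiv 2 (Fin n → ℝ)).symm (E *ᵥ x))
    simp only [add_neg_cancel_right, norm_neg] at this
    linarith
  have hfinal : (γ - opNorm E) * en x ≤ L * en x := by
    have h1 : γ * en x - opNorm E * en x ≤ L * en x := by linarith
    linarith [h1, sub_mul γ (opNorm E) (en x)]
  exact le_of_mul_le_mul_right (by linarith [hfinal]) henx

/-- In the setting of the rank-`k` projection lemma (`A` symmetric with eigenvalues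
`β` sorted by magnitude, `|β_k| > 0`, `E` symmetric with `‖E‖₂ < |β_k|/2`,
`P_k(A+E) = U Λ Uᵀ`), for every integer `a ≥ 2`:
`‖A U Λ^{−a} Uᵀ A‖₂ ≤ 4 (|β_k|/2)^{−a+2}`. -/
theorem stmt4 (n k : ℕ) (hk1 : 1 ≤ k) (hkn : k < n)
    (A E : Matrix (Fin n) (Fin n) ℝ) (hAsymm : A.IsSymm) (hEsymm : E.IsSymm)
    (P V : Matrix (Fin n) (Fin n) ℝ) (β lam : Fin n → ℝ)
    (hP : Pᵀ * P = 1) (hAdecomp : A = P * Matrix.diagonal β * Pᵀ)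
    (hβsorted : Antitone (fun i => |β i|))
    (hV : Vᵀ * V = 1) (hWdecomp : A + E = V * Matrix.diagonal lam * Vᵀ)
    (hlamsorted : Antitone (fun i => |lam i|))
    (hβk : 0 < |β ⟨k - 1, by omega⟩|)
    (hEnorm : opNorm E < |β ⟨k - 1, by omega⟩| / 2)
    (U : Matrix (Fin n) (Fin k) ℝ)
    (hU : U = Matrix.of fun i (j : Fin k) => V i (Fin.castLE hkn.le j)) :
    ∀ a : ℕ, 2 ≤ a →
      opNorm (A * U *
          Matrix.diagonal (fun j : Fin k => ((lam (Fin.castLE hkn.le j))⁻¹) ^ a) * Uᵀ * A)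
        ≤ 4 * (|β ⟨k - 1, by omega⟩| / 2) ^ ((2 : ℤ) - (a : ℤ)) := by
  intro a ha
  classical
  have hn : 0 < n := by omega
  set γ := |β ⟨k - 1, by omega⟩| with hγdef
  set c := γ / 2 with hcdef
  have hc0 : 0 < c := by positivity
  set t := c⁻¹ with htdef
  have ht0 : 0 < t := by positivity
  have hct : c * t = 1 := mul_inv_cancel₀ (ne_of_gt hc0)
  -- lower bound on the eigenvalues of A + E
  have hweyl : γ - opNorm E ≤ |lam ⟨k - 1, by omega⟩| :=
    weyl_step hk1 hkn A E P V β lam hP hAdecomp hβsorted hV hWdecomp hlamsorted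
  have hlam_lb : ∀ i : Fin n, i.val < k → c ≤ |lam i| := by
    intro i hik
    have h1 : |lam ⟨k - 1, by omega⟩| ≤ |lam i| := by
      apply hlamsorted
      exact Fin.le_def.mpr (by simp only [Fin.val_mk]; omega)
    have h2 : c < γ - opNorm E := by
      rw [hcdef]; linarith [hEnorm]
    linarith
  have hlam_ne : ∀ i : Fin n, i.val < k → lam i ≠ 0 := by
    intro i hik h0
    have := hlam_lb i hik
    rw [h0, abs_zero] at this
    linarith
  -- the padded diagonal
  set d' : Fin n → ℝ := fun i => if i.val < k then ((lam i)⁻¹) ^ a else 0 with hd'def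
  set dk : Fin k → ℝ := fun j => ((lam (Fin.castLE hkn.le j))⁻¹) ^ a with hdkdef
  have hUDU : U * Matrix.diagonal dk * Uᵀ = V * Matrix.diagonal d' * Vᵀ := by
    apply UDU_eq hkn V U hU
    · intro j
      simp only [hd'def, hdkdef]
      rw [if_pos]
      exact j.isLt
    · intro m hm
      simp only [hd'def]
      rw [if_neg hm]
  -- sandwich identities
  have hVVt : V * Vᵀ = 1 := mul_eq_one_comm.mp hV
  have hsand : ∀ d e : Fin n → ℝ,
      (V * Matrix.diagonal d * Vᵀ) * (V * Matrix.diagonal e * Vᵀ)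
        = V * Matrix.diagonal (fun i => d i * e i) * Vᵀ := by
    intro d e
    have h1 : (V * Matrix.diagonal d * Vᵀ) * (V * Matrix.diagonal e * Vᵀ)
        = V * Matrix.diagonal d * (Vᵀ * V) * (Matrix.diagonal e * Vᵀ) := by
      noncomm_ring
    rw [h1, hV, Matrix.mul_one]
    have h2 : V * Matrix.diagonal d * (Matrix.diagonal e * Vᵀ)
        = V * (Matrix.diagonal d * Matrix.diagonal e) * Vᵀ := by noncomm_ring
    rw [h2, Matrix.diagonal_mul_diagonal]
  -- A = W - E
  set W := V * Matrix.diagonal lam * Vᵀ with hWdef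
  have hAW : A = W - E := eq_sub_of_add_eq hWdecomp
  -- the expansion
  have hWD : W * (V * Matrix.diagonal d' * Vᵀ) = V * Matrix.diagonal (fun i => lam i * d' i) * Vᵀ :=
    hsand lam d'
  have hDW : (V * Matrix.diagonal d' * Vᵀ) * W = V * Matrix.diagonal (fun i => d' i * lam i) * Vᵀ :=
    hsand d' lam
  have hWDW : W * (V * Matrix.diagonal d' * Vᵀ) * W
      = V * Matrix.diagonal (fun i => (lam i * d' i) * lam i) * Vᵀ := by
    rw [hWD]
    exact hsand (fun i => lam i * d' i) lam
  have hexp : A * (V * Matrix.diagonal d' * Vᵀ) * A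
      = V * Matrix.diagonal (fun i => (lam i * d' i) * lam i) * Vᵀ
        - E * (V * Matrix.diagonal (fun i => d' i * lam i) * Vᵀ)
        - (V * Matrix.diagonal (fun i => lam i * d' i) * Vᵀ) * E
        + E * (V * Matrix.diagonal d' * Vᵀ) * E := by
    rw [hAW]
    have h3 : (W - E) * (V * Matrix.diagonal d' * Vᵀ) * (W - E)
        = W * (V * Matrix.diagonal d' * Vᵀ) * W
          - E * ((V * Matrix.diagonal d' * Vᵀ) * W)
          - (W * (V * Matrix.diagonal d' * Vᵀ)) * E
          + E * (V * Matrix.diagonal d' * Vᵀ) * E := by noncomm_ring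
    rw [h3, hWDW, hDW, hWD]
  -- norms of the orthogonal factors
  have hVn : opNorm V = 1 := opNorm_orthogonal' hn V hV
  have hVtn : opNorm Vᵀ = 1 := by
    apply opNorm_orthogonal' hn
    rw [Matrix.transpose_transpose]
    exact hVVt
  have hsandnorm : ∀ (d : Fin n → ℝ) (b : ℝ), 0 ≤ b → (∀ i, |d i| ≤ b) →
      opNorm (V * Matrix.diagonal d * Vᵀ) ≤ b := by
    intro d b hb hd
    calc opNorm (V * Matrix.diagonal d * Vᵀ)
        ≤ opNorm (V * Matrix.diagonal d) * opNorm Vᵀ := opNorm_mul_le' _ _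
      _ ≤ opNorm V * opNorm (Matrix.diagonal d) * opNorm Vᵀ := by
          apply mul_le_mul_of_nonneg_right (opNorm_mul_le' _ _) (opNorm_nonneg' _)
      _ = opNorm (Matrix.diagonal d) := by rw [hVn, hVtn, one_mul, mul_one]
      _ ≤ b := opNorm_diagonal_le' d b hb hd
  -- entry bounds
  have habs_inv : ∀ i : Fin n, i.val < k → |(lam i)⁻¹| ≤ t := by
    intro i hik
    rw [abs_inv]
    exact inv_anti₀ hc0 (hlam_lb i hik)
  have hb1 : ∀ i, |(lam i * d' i) * lam i| ≤ t ^ (a - 2) := by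
    intro i
    simp only [hd'def]
    by_cases hik : i.val < k
    · rw [if_pos hik]
      have hne := hlam_ne i hik
      have hid : lam i * (lam i)⁻¹ ^ a * lam i = ((lam i)⁻¹) ^ (a - 2) := by
        have hsplit : ((lam i)⁻¹) ^ a = ((lam i)⁻¹) ^ (a - 2) * ((lam i)⁻¹) ^ 2 := by
          rw [← pow_add]
          congr 1
          omega
        rw [hsplit]
        field_simp
        all_goals ring
      rw [hid, abs_pow]
      exact pow_le_pow_left₀ (abs_nonneg _) (habs_inv i hik) _
    · rw [if_neg hik]
      simp only [mul_zero, zero_mul, abs_zero]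
      positivity
  have hb2 : ∀ i, |d' i * lam i| ≤ t ^ (a - 1) := by
    intro i
    simp only [hd'def]
    by_cases hik : i.val < k
    · rw [if_pos hik]
      have hne := hlam_ne i hik
      have hid : ((lam i)⁻¹) ^ a * lam i = ((lam i)⁻¹) ^ (a - 1) := by
        have hsplit : ((lam i)⁻¹) ^ a = ((lam i)⁻¹) ^ (a - 1) * ((lam i)⁻¹) ^ 1 := by
          rw [← pow_add]
          congr 1
          omega
        rw [hsplit]
        field_simp
        all_goals ring
      rw [hid, abs_pow]
      exact pow_le_pow_left₀ (abs_nonneg _) (habs_inv i hik) _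
    · rw [if_neg hik]
      simp only [zero_mul, abs_zero]
      positivity
  have hb3 : ∀ i, |lam i * d' i| ≤ t ^ (a - 1) := by
    intro i
    have := hb2 i
    rwa [mul_comm] at this
  have hb4 : ∀ i, |d' i| ≤ t ^ a := by
    intro i
    simp only [hd'def]
    by_cases hik : i.val < k
    · rw [if_pos hik, abs_pow]
      exact pow_le_pow_left₀ (abs_nonneg _) (habs_inv i hik) _
    · rw [if_neg hik, abs_zero]
      positivity
  have hE_le : opNorm E ≤ c := by
    rw [hcdef]; linarith [hEnorm]
  -- the four term bounds
  have hT1 : opNorm (V * Matrix.diagonal (fun i => (lam i * d' i) * lam i) * Vᵀ) ≤ t ^ (a - 2) :=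
    hsandnorm _ _ (by positivity) hb1
  have hT2 : opNorm (E * (V * Matrix.diagonal (fun i => d' i * lam i) * Vᵀ)) ≤ t ^ (a - 2) := by
    calc opNorm (E * (V * Matrix.diagonal (fun i => d' i * lam i) * Vᵀ))
        ≤ opNorm E * opNorm (V * Matrix.diagonal (fun i => d' i * lam i) * Vᵀ) :=
          opNorm_mul_le' _ _
      _ ≤ c * t ^ (a - 1) := by
          apply mul_le_mul hE_le (hsandnorm _ _ (by positivity) hb2)
            (opNorm_nonneg' _) (le_of_lt hc0)
      _ = t ^ (a - 2) := by
          have : t ^ (a - 1) = t * t ^ (a - 2) := by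
            rw [← pow_succ']
            congr 1
            omega
          rw [this, ← mul_assoc, hct, one_mul]
  have hT3 : opNorm ((V * Matrix.diagonal (fun i => lam i * d' i) * Vᵀ) * E) ≤ t ^ (a - 2) := by
    calc opNorm ((V * Matrix.diagonal (fun i => lam i * d' i) * Vᵀ) * E)
        ≤ opNorm (V * Matrix.diagonal (fun i => lam i * d' i) * Vᵀ) * opNorm E :=
          opNorm_mul_le' _ _
      _ ≤ t ^ (a - 1) * c := by
          apply mul_le_mul (hsandnorm _ _ (by positivity) hb3) hE_le
            (opNorm_nonneg' _) (by positivity)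
      _ = t ^ (a - 2) := by
          have : t ^ (a - 1) = t ^ (a - 2) * t := by
            rw [← pow_succ]
            congr 1
            omega
          rw [this, mul_assoc]
          rw [mul_comm t c, hct, mul_one]
  have hT4 : opNorm (E * (V * Matrix.diagonal d' * Vᵀ) * E) ≤ t ^ (a - 2) := by
    calc opNorm (E * (V * Matrix.diagonal d' * Vᵀ) * E)
        ≤ opNorm (E * (V * Matrix.diagonal d' * Vᵀ)) * opNorm E := opNorm_mul_le' _ _
      _ ≤ opNorm E * opNorm (V * Matrix.diagonal d' * Vᵀ) * opNorm E := by
          apply mul_le_mul_of_nonneg_right (opNorm_mul_le' _ _) (opNorm_nonneg' _)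
      _ ≤ c * t ^ a * c := by
          apply mul_le_mul _ hE_le (opNorm_nonneg' _) (by positivity)
          exact mul_le_mul hE_le (hsandnorm _ _ (by positivity) hb4)
            (opNorm_nonneg' _) (le_of_lt hc0)
      _ = t ^ (a - 2) := by
          have : t ^ a = t * (t ^ (a - 2) * t) := by
            rw [← pow_succ, ← pow_succ']
            congr 1
            omega
          rw [this]
          calc c * (t * (t ^ (a - 2) * t)) * c
              = (c * t) * (t ^ (a - 2)) * (t * c) := by ring
            _ = t ^ (a - 2) := by rw [hct, mul_comm t c, hct, one_mul, mul_one]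
  -- put it together
  have hgoal_eq : A * U * Matrix.diagonal dk * Uᵀ * A
      = A * (V * Matrix.diagonal d' * Vᵀ) * A := by
    rw [Matrix.mul_assoc A U (Matrix.diagonal dk), Matrix.mul_assoc A (U * Matrix.diagonal dk) Uᵀ,
      hUDU]
  have hrhs : (4 : ℝ) * c ^ ((2 : ℤ) - (a : ℤ)) = 4 * t ^ (a - 2) := by
    congr 1
    have h1 : ((2 : ℤ) - (a : ℤ)) = -(((a - 2 : ℕ) : ℤ)) := by push_cast [Nat.cast_sub ha]; ring
    rw [h1, _root_.zpow_neg, zpow_natCast, ← inv_pow]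
  calc opNorm (A * U * Matrix.diagonal dk * Uᵀ * A)
      = opNorm (A * (V * Matrix.diagonal d' * Vᵀ) * A) := by rw [hgoal_eq]
    _ = opNorm (V * Matrix.diagonal (fun i => (lam i * d' i) * lam i) * Vᵀ
        - E * (V * Matrix.diagonal (fun i => d' i * lam i) * Vᵀ)
        - (V * Matrix.diagonal (fun i => lam i * d' i) * Vᵀ) * E
        + E * (V * Matrix.diagonal d' * Vᵀ) * E) := by rw [hexp]
    _ ≤ opNorm (V * Matrix.diagonal (fun i => (lam i * d' i) * lam i) * Vᵀ
        - E * (V * Matrix.diagonal (fun i => d' i * lam i) * Vᵀ)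
        - (V * Matrix.diagonal (fun i => lam i * d' i) * Vᵀ) * E)
        + opNorm (E * (V * Matrix.diagonal d' * Vᵀ) * E) := opNorm_add_le' _ _
    _ ≤ (opNorm (V * Matrix.diagonal (fun i => (lam i * d' i) * lam i) * Vᵀ
        - E * (V * Matrix.diagonal (fun i => d' i * lam i) * Vᵀ))
        + opNorm ((V * Matrix.diagonal (fun i => lam i * d' i) * Vᵀ) * E))
        + opNorm (E * (V * Matrix.diagonal d' * Vᵀ) * E) := by
          apply add_le_add_left (opNorm_sub_le' _ _)
    _ ≤ ((opNorm (V * Matrix.diagonal (fun i => (lam i * d' i) * lam i) * Vᵀ)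
        + opNorm (E * (V * Matrix.diagonal (fun i => d' i * lam i) * Vᵀ)))
        + opNorm ((V * Matrix.diagonal (fun i => lam i * d' i) * Vᵀ) * E))
        + opNorm (E * (V * Matrix.diagonal d' * Vᵀ) * E) := by
          apply add_le_add_left (add_le_add_left (opNorm_sub_le' _ _) _)
    _ ≤ ((t ^ (a - 2) + t ^ (a - 2)) + t ^ (a - 2)) + t ^ (a - 2) := by
          apply add_le_add (add_le_add (add_le_add hT1 hT2) hT3) hT4
    _ = 4 * t ^ (a - 2) := by ring
    _ = 4 * c ^ ((2 : ℤ) - (a : ℤ)) := hrhs.symm
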